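/- Let α be a compactly supported centered Borel probability measure on ℝ^D, β a compactly supported centered Borel probability measure on ℝ^E, and ε > 0. Define D_ε(Γ) = ‖Γ‖_F² + (1/8)·OT_ε^Γ(α,β). Let (Γ_t)_{t≥0} be a sequence in ℝ^{D×E} such that for every t there is π_{t+1} ∈ Π(α,β) attaining the infimum defining OT_ε^{Γ_t}(α,β) with Γ_{t+1} = ∫ x yᵀ dπ_{t+1}(x,y). Then for every t ≥ 1, Σ_{k=0}^{t−1} ‖Γ_k − Γ_{k+1}‖_F² ≤ D_ε(Γ_0) − D_ε(Γ_t); moreover, if D_ε is bounded below on ℝ^{D×E}, then ‖Γ_t − Γ_{t+1}‖_F → 0 as t → ∞. -/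

import Mathlib

open MeasureTheory Classical Filter

/-- Kullback–Leibler divergence, with value `⊤` when `π` is not absolutely continuous
with respect to `μ` or the log-likelihood ratio is not integrable. -/
noncomputable def klE {Z : Type*} [MeasurableSpace Z] (π μ : Measure Z) : EReal :=
  if π ≪ μ ∧ Integrable (llr π μ) π then ((∫ z, llr π μ z ∂π : ℝ) : EReal) else ⊤

/-- The set of couplings between `α` and `β`. -/
def couplings {X Y : Type*} [MeasurableSpace X] [MeasurableSpace Y]
    (α : Measure X) (β : Measure Y) : Set (Measure (X × Y)) :=
  {π | π.map Prod.fst = α ∧ π.map Prod.snd = β}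

/-- The entropic OT cost `OT_ε^Γ(α,β)` for the cost
`c_Γ(x,y) = -16 ⟨Γ, x yᵀ⟩_F - 4 ‖x‖² ‖y‖²`. -/
noncomputable def otGammaM {D E : ℕ}
    (α : Measure (EuclideanSpace ℝ (Fin D))) (β : Measure (EuclideanSpace ℝ (Fin E)))
    (ε : ℝ) (Γ : Matrix (Fin D) (Fin E) ℝ) : EReal :=
  ⨅ π ∈ couplings α β,
    ((∫ p, (-16 * ∑ i, ∑ j, Γ i j * (p.1 i * p.2 j)
        - 4 * ‖p.1‖ ^ 2 * ‖p.2‖ ^ 2) ∂π : ℝ) : EReal)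
      + (ε : EReal) * klE π (α.prod β)

/-- The dual function `D_ε(Γ) = ‖Γ‖_F² + (1/8) OT_ε^Γ(α,β)`. -/
noncomputable def dualFun {D E : ℕ}
    (α : Measure (EuclideanSpace ℝ (Fin D))) (β : Measure (EuclideanSpace ℝ (Fin E)))
    (ε : ℝ) (Γ : Matrix (Fin D) (Fin E) ℝ) : ℝ :=
  (∑ i, ∑ j, (Γ i j) ^ 2) + (1 / 8) * (otGammaM α β ε Γ).toReal

/-- `klE` of a measure against itself vanishes. -/
lemma klE_self {Z : Type*} [MeasurableSpace Z] (μ : Measure Z) [SigmaFinite μ] :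
    klE μ μ = ((0 : ℝ) : EReal) := by
  have hllr : llr μ μ =ᵐ[μ] 0 := by
    filter_upwards [μ.rnDeriv_self] with z hz
    simp [llr, hz]
  have hint : Integrable (llr μ μ) μ := by
    rw [integrable_congr hllr]
    exact integrable_zero _ _ _
  rw [klE, if_pos ⟨Measure.AbsolutelyContinuous.rfl, hint⟩]
  norm_cast
  rw [integral_congr_ae hllr]
  simp

/-- `klE` is never `⊥`. -/
lemma klE_ne_bot {Z : Type*} [MeasurableSpace Z] (π μ : Measure Z) : klE π μ ≠ ⊥ := by
  rw [klE]
  split <;> simp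

/-- Continuous functions are integrable against a probability measure supported
on a compact set. -/
lemma integ_aux {D E : ℕ} (π : Measure (EuclideanSpace ℝ (Fin D) × EuclideanSpace ℝ (Fin E)))
    [IsProbabilityMeasure π] (K : Set (EuclideanSpace ℝ (Fin D) × EuclideanSpace ℝ (Fin E)))
    (hK : IsCompact K) (hπK : π Kᶜ = 0)
    (f : EuclideanSpace ℝ (Fin D) × EuclideanSpace ℝ (Fin E) → ℝ) (hf : Continuous f) :
    Integrable f π := by
  obtain ⟨C, hC⟩ := hK.exists_bound_of_continuousOn hf.continuousOn
  refine Integrable.mono' (integrable_const C) hf.aestronglyMeasurable ?_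
  rw [ae_iff]
  refine measure_mono_null (fun p hp => ?_) hπK
  simp only [Set.mem_setOf_eq, not_le] at hp
  intro hpK
  exact absurd (hC p hpK) (not_le.mpr hp)

/-- Linearity of the entropic-OT cost integral. -/
lemma cost_integral {D E : ℕ} (π : Measure (EuclideanSpace ℝ (Fin D) × EuclideanSpace ℝ (Fin E)))
    [IsProbabilityMeasure π] (K : Set (EuclideanSpace ℝ (Fin D) × EuclideanSpace ℝ (Fin E)))
    (hK : IsCompact K) (hπK : π Kᶜ = 0) (Γ : Matrix (Fin D) (Fin E) ℝ) :
    ∫ p, (-16 * ∑ i, ∑ j, Γ i j * (p.1 i * p.2 j) - 4 * ‖p.1‖ ^ 2 * ‖p.2‖ ^ 2) ∂π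
      = -16 * (∑ i, ∑ j, Γ i j * ∫ p, p.1 i * p.2 j ∂π)
        - 4 * ∫ p, ‖p.1‖ ^ 2 * ‖p.2‖ ^ 2 ∂π := by
  have hcont : ∀ (i : Fin D) (j : Fin E),
      Continuous fun p : EuclideanSpace ℝ (Fin D) × EuclideanSpace ℝ (Fin E) => p.1 i * p.2 j :=
    fun i j => ((PiLp.continuous_apply 2 _ i).comp continuous_fst).mul
      ((PiLp.continuous_apply 2 _ j).comp continuous_snd)
  have hint : ∀ (i : Fin D) (j : Fin E), Integrable (fun p => p.1 i * p.2 j) π :=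
    fun i j => integ_aux π K hK hπK _ (hcont i j)
  have hintg : Integrable (fun p : EuclideanSpace ℝ (Fin D) × EuclideanSpace ℝ (Fin E) =>
      ‖p.1‖ ^ 2 * ‖p.2‖ ^ 2) π :=
    integ_aux π K hK hπK _ ((continuous_fst.norm.pow 2).mul (continuous_snd.norm.pow 2))
  have hintF : Integrable (fun p : EuclideanSpace ℝ (Fin D) × EuclideanSpace ℝ (Fin E) =>
      ∑ i, ∑ j, Γ i j * (p.1 i * p.2 j)) π := by
    apply integrable_finset_sum
    intro i _
    apply integrable_finset_sum
    intro j _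
    exact (hint i j).const_mul _
  have h1 : ∫ p, (-16 * ∑ i, ∑ j, Γ i j * (p.1 i * p.2 j) - 4 * ‖p.1‖ ^ 2 * ‖p.2‖ ^ 2) ∂π
      = ∫ p, (-16 * ∑ i, ∑ j, Γ i j * (p.1 i * p.2 j)) ∂π
        - ∫ p, (4 * ‖p.1‖ ^ 2) * ‖p.2‖ ^ 2 ∂π := by
    rw [← integral_sub (hintF.const_mul (-16)) (by simpa [mul_assoc] using hintg.const_mul 4)]
  rw [h1, integral_const_mul (-16)]
  have h2 : ∫ p, (∑ i, ∑ j, Γ i j * (p.1 i * p.2 j)) ∂π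
      = ∑ i, ∑ j, Γ i j * ∫ p, p.1 i * p.2 j ∂π := by
    rw [integral_finset_sum _ (fun i _ => by
      exact integrable_finset_sum _ (fun j _ => (hint i j).const_mul _))]
    refine Finset.sum_congr rfl fun i _ => ?_
    rw [integral_finset_sum _ (fun j _ => (hint i j).const_mul _)]
    exact Finset.sum_congr rfl fun j _ => integral_const_mul _ _
  rw [h2]
  congr 1
  rw [show (fun p : EuclideanSpace ℝ (Fin D) × EuclideanSpace ℝ (Fin E) =>
      (4 * ‖p.1‖ ^ 2) * ‖p.2‖ ^ 2) = fun p => 4 * (‖p.1‖ ^ 2 * ‖p.2‖ ^ 2) from by funext p; ring]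
  rw [integral_const_mul]

/-- along the alternating-minimization iterates, the sum of squared
Frobenius increments is bounded by the decrease of the dual function; if the dual
function is bounded below, the increments tend to zero. -/
theorem alternating_minimization_convergence {D E : ℕ}
    (α : Measure (EuclideanSpace ℝ (Fin D))) (β : Measure (EuclideanSpace ℝ (Fin E)))
    [IsProbabilityMeasure α] [IsProbabilityMeasure β]
    (KX : Set (EuclideanSpace ℝ (Fin D))) (KY : Set (EuclideanSpace ℝ (Fin E)))
    (hKX : IsCompact KX) (hKY : IsCompact KY) (hαK : α KXᶜ = 0) (hβK : β KYᶜ = 0)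
    (hαcentered : ∫ x, x ∂α = 0) (hβcentered : ∫ y, y ∂β = 0)
    (ε : ℝ) (hε : 0 < ε)
    (Γs : ℕ → Matrix (Fin D) (Fin E) ℝ)
    (πs : ℕ → Measure (EuclideanSpace ℝ (Fin D) × EuclideanSpace ℝ (Fin E)))
    (hπ : ∀ t : ℕ, πs (t + 1) ∈ couplings α β)
    (hopt : ∀ t : ℕ,
      ((∫ p, (-16 * ∑ i, ∑ j, (Γs t) i j * (p.1 i * p.2 j)
          - 4 * ‖p.1‖ ^ 2 * ‖p.2‖ ^ 2) ∂(πs (t + 1)) : ℝ) : EReal)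
        + (ε : EReal) * klE (πs (t + 1)) (α.prod β) = otGammaM α β ε (Γs t))
    (hΓ : ∀ t : ℕ, Γs (t + 1) = Matrix.of fun i j => ∫ p, p.1 i * p.2 j ∂(πs (t + 1))) :
    (∀ t : ℕ, 1 ≤ t →
        (∑ k ∈ Finset.range t, ∑ i, ∑ j, ((Γs k) i j - (Γs (k + 1)) i j) ^ 2)
          ≤ dualFun α β ε (Γs 0) - dualFun α β ε (Γs t)) ∧
      ((∃ m : ℝ, ∀ Γ : Matrix (Fin D) (Fin E) ℝ, m ≤ dualFun α β ε Γ) →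
        Tendsto
          (fun t => Real.sqrt (∑ i, ∑ j, ((Γs t) i j - (Γs (t + 1)) i j) ^ 2))
          atTop (nhds 0)) := by
  -- basic facts about the iterates
  have hprod_mem : α.prod β ∈ couplings α β :=
    ⟨by rw [← Measure.fst]; exact Measure.fst_prod, by rw [← Measure.snd]; exact Measure.snd_prod⟩
  have hle : ∀ (Γ : Matrix (Fin D) (Fin E) ℝ)
      (π : Measure (EuclideanSpace ℝ (Fin D) × EuclideanSpace ℝ (Fin E))),
      π ∈ couplings α β → otGammaM α β ε Γ ≤
      ((∫ p, (-16 * ∑ i, ∑ j, Γ i j * (p.1 i * p.2 j)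
        - 4 * ‖p.1‖ ^ 2 * ‖p.2‖ ^ 2) ∂π : ℝ) : EReal) + (ε : EReal) * klE π (α.prod β) := by
    intro Γ π hmem
    exact iInf₂_le π hmem
  have hOT_ne_top : ∀ Γ : Matrix (Fin D) (Fin E) ℝ, otGammaM α β ε Γ ≠ ⊤ := by
    intro Γ
    have h1 := hle Γ (α.prod β) hprod_mem
    rw [klE_self, show ((0:ℝ):EReal) = 0 from rfl, mul_zero, add_zero] at h1
    intro h
    rw [h] at h1
    exact EReal.coe_ne_top _ (top_le_iff.mp h1)
  have hprob : ∀ t : ℕ, IsProbabilityMeasure (πs (t + 1)) := by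
    intro t
    constructor
    have h := (hπ t).1
    have h2 : (πs (t + 1)).map Prod.fst Set.univ = 1 := by rw [h]; exact measure_univ
    rwa [Measure.map_apply measurable_fst MeasurableSet.univ, Set.preimage_univ] at h2
  have hnull : ∀ t : ℕ, (πs (t + 1)) (KX ×ˢ KY)ᶜ = 0 := by
    intro t
    have h1 : (πs (t + 1)) (Prod.fst ⁻¹' KXᶜ) = 0 := by
      rw [← Measure.map_apply measurable_fst hKX.isClosed.measurableSet.compl, (hπ t).1]
      exact hαK
    have h2 : (πs (t + 1)) (Prod.snd ⁻¹' KYᶜ) = 0 := by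
      rw [← Measure.map_apply measurable_snd hKY.isClosed.measurableSet.compl, (hπ t).2]
      exact hβK
    refine measure_mono_null (fun p hp => ?_) (measure_union_null h1 h2)
    simp only [Set.mem_compl_iff, Set.mem_prod, not_and_or] at hp
    simpa using hp
  have hKXY : IsCompact (KX ×ˢ KY) := hKX.prod hKY
  -- finiteness of the KL terms and OT values along the iterates
  have hfin : ∀ t : ℕ, ∃ K : ℝ, klE (πs (t + 1)) (α.prod β) = (K : EReal) ∧
      otGammaM α β ε (Γs t)
        = (((∫ p, (-16 * ∑ i, ∑ j, (Γs t) i j * (p.1 i * p.2 j)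
            - 4 * ‖p.1‖ ^ 2 * ‖p.2‖ ^ 2) ∂(πs (t + 1))) + ε * K : ℝ) : EReal) := by
    intro t
    have hκtop : klE (πs (t + 1)) (α.prod β) ≠ ⊤ := by
      intro h
      apply hOT_ne_top (Γs t)
      rw [← hopt t, h, EReal.mul_top_of_pos (by exact_mod_cast hε),
        EReal.add_top_of_ne_bot (EReal.coe_ne_bot _)]
    obtain ⟨K, hK⟩ : ∃ K : ℝ, klE (πs (t + 1)) (α.prod β) = (K : EReal) :=
      ⟨_, (EReal.coe_toReal hκtop (klE_ne_bot _ _)).symm⟩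
    refine ⟨K, hK, ?_⟩
    rw [← hopt t, hK, ← EReal.coe_mul, ← EReal.coe_add]
  -- the key one-step descent estimate
  have key : ∀ t : ℕ,
      (∑ i, ∑ j, ((Γs t) i j - (Γs (t + 1)) i j) ^ 2)
        ≤ dualFun α β ε (Γs t) - dualFun α β ε (Γs (t + 1)) := by
    intro t
    have hPM := hprob t
    obtain ⟨K, hK, hOTt⟩ := hfin t
    obtain ⟨K', hK', hOTt1⟩ := hfin (t + 1)
    set A := Γs t with hA
    set B := Γs (t + 1) with hBdef
    have hB : ∀ i j, B i j = ∫ p, p.1 i * p.2 j ∂(πs (t + 1)) := by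
      intro i j
      rw [hBdef, hΓ t]
      rfl
    -- the two cost integrals
    have hr := cost_integral (πs (t + 1)) (KX ×ˢ KY) hKXY (hnull t) A
    have hs := cost_integral (πs (t + 1)) (KX ×ˢ KY) hKXY (hnull t) B
    set G := ∫ p, ‖p.1‖ ^ 2 * ‖p.2‖ ^ 2 ∂(πs (t + 1)) with hG
    set r := ∫ p, (-16 * ∑ i, ∑ j, A i j * (p.1 i * p.2 j)
        - 4 * ‖p.1‖ ^ 2 * ‖p.2‖ ^ 2) ∂(πs (t + 1)) with hrdef
    set s := ∫ p, (-16 * ∑ i, ∑ j, B i j * (p.1 i * p.2 j)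
        - 4 * ‖p.1‖ ^ 2 * ‖p.2‖ ^ 2) ∂(πs (t + 1)) with hsdef
    have hrval : r = -16 * (∑ i, ∑ j, A i j * B i j) - 4 * G := by
      rw [hr]
      congr 2
      exact Finset.sum_congr rfl fun i _ => Finset.sum_congr rfl fun j _ => by rw [hB i j]
    have hsval : s = -16 * (∑ i, ∑ j, B i j * B i j) - 4 * G := by
      rw [hs]
      congr 2
      exact Finset.sum_congr rfl fun i _ => Finset.sum_congr rfl fun j _ => by rw [hB i j]
    -- dual function value at A
    have hdA : dualFun α β ε A = (∑ i, ∑ j, A i j ^ 2) + (1 / 8) * (r + ε * K) := by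
      rw [dualFun, hOTt, EReal.toReal_coe]
    -- dual function bound at B
    have hub : otGammaM α β ε B ≤ ((s + ε * K : ℝ) : EReal) := by
      have h := hle B (πs (t + 1)) (hπ t)
      rwa [hK, ← EReal.coe_mul, ← EReal.coe_add] at h
    have hdB : dualFun α β ε B ≤ (∑ i, ∑ j, B i j ^ 2) + (1 / 8) * (s + ε * K) := by
      rw [dualFun, hOTt1, EReal.toReal_coe]
      have : (((∫ p, (-16 * ∑ i, ∑ j, B i j * (p.1 i * p.2 j)
            - 4 * ‖p.1‖ ^ 2 * ‖p.2‖ ^ 2) ∂(πs (t + 2))) + ε * K' : ℝ)) ≤ s + ε * K := by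
        rw [← EReal.coe_le_coe_iff, ← hOTt1]
        exact hub
      linarith
    -- algebra
    have halg : ∑ i, ∑ j, (A i j - B i j) ^ 2
        = (∑ i, ∑ j, A i j ^ 2) + (∑ i, ∑ j, B i j * B i j)
          - 2 * ∑ i, ∑ j, A i j * B i j := by
      have h : ∀ i j, (A i j - B i j) ^ 2
          = A i j ^ 2 + B i j * B i j - 2 * (A i j * B i j) := fun i j => by ring
      simp_rw [h, Finset.sum_sub_distrib, Finset.sum_add_distrib, Finset.mul_sum]
    have hBB : (∑ i, ∑ j, B i j ^ 2) = ∑ i, ∑ j, B i j * B i j := by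
      simp [sq]
    rw [halg]
    linarith [hdA, hdB, hrval, hsval, hBB]
  -- telescoping
  have htel : ∀ t : ℕ,
      (∑ k ∈ Finset.range t, ∑ i, ∑ j, ((Γs k) i j - (Γs (k + 1)) i j) ^ 2)
        ≤ dualFun α β ε (Γs 0) - dualFun α β ε (Γs t) := by
    intro t
    calc (∑ k ∈ Finset.range t, ∑ i, ∑ j, ((Γs k) i j - (Γs (k + 1)) i j) ^ 2)
        ≤ ∑ k ∈ Finset.range t,
            (dualFun α β ε (Γs k) - dualFun α β ε (Γs (k + 1))) :=
          Finset.sum_le_sum fun k _ => key k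
      _ = dualFun α β ε (Γs 0) - dualFun α β ε (Γs t) :=
          Finset.sum_range_sub' (fun k => dualFun α β ε (Γs k)) t
  refine ⟨fun t _ => htel t, ?_⟩
  rintro ⟨m, hm⟩
  have hnonneg : ∀ k : ℕ, 0 ≤ ∑ i, ∑ j, ((Γs k) i j - (Γs (k + 1)) i j) ^ 2 :=
    fun k => Finset.sum_nonneg fun i _ => Finset.sum_nonneg fun j _ => sq_nonneg _
  have hbdd : ∀ n : ℕ,
      (∑ k ∈ Finset.range n, ∑ i, ∑ j, ((Γs k) i j - (Γs (k + 1)) i j) ^ 2)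
        ≤ dualFun α β ε (Γs 0) - m := by
    intro n
    have := htel n
    have := hm (Γs n)
    linarith
  have hsum : Summable fun k => ∑ i, ∑ j, ((Γs k) i j - (Γs (k + 1)) i j) ^ 2 :=
    summable_of_sum_range_le hnonneg hbdd
  have h0 := hsum.tendsto_atTop_zero
  simpa using h0.sqrt
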